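/- Let N be a finitely generated abelian group, M a subgroup containing the torsion subgroup N_tors, and p a prime. Suppose x ∈ N does not lie in the image of M ⊗ Z_(p) in N ⊗ Z_(p). Then there is a group homomorphism ψ₀ : N → Z such that ψ₀(x) ∉ ψ₀(M) + p^n Z for all sufficiently large n. -/

import Mathlib

/-- Membership in a submodule from Smith-normal-form coordinate conditions. -/
theorem stmt4_mem_of_repr {F : Type} [AddCommGroup F] [Module ℤ F] {ι : Type} [Fintype ι]
    [DecidableEq ι] {M' : Submodule ℤ F} {n : ℕ} (snf : Module.Basis.SmithNormalForm M' ι n) (y : F)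
    (h0 : ∀ j, j ∉ Set.range snf.f → snf.bM.repr y j = 0)
    (hdvd : ∀ i, snf.a i ∣ snf.bM.repr y (snf.f i)) : y ∈ M' := by
  classical
  set t : Fin n → ℤ := fun i => snf.bM.repr y (snf.f i) / snf.a i with ht
  have key : Fintype.linearCombination ℤ (fun i => ((snf.bN i : F))) t = y := by
    apply snf.bM.repr.injective
    ext j
    simp only [Fintype.linearCombination_apply, map_sum, map_smul, Finsupp.finset_sum_apply,
      Finsupp.smul_apply, snf.snf, Module.Basis.repr_self, smul_eq_mul, Finsupp.single_apply,
      mul_ite, mul_one, mul_zero]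
    by_cases hj : j ∈ Set.range snf.f
    · obtain ⟨i₀, rfl⟩ := hj
      rw [Finset.sum_eq_single i₀]
      · rw [if_pos rfl, ht, Int.ediv_mul_cancel (hdvd i₀)]
      · intro i _ hi
        exact if_neg fun h => hi (snf.f.injective h)
      · intro h; exact absurd (Finset.mem_univ i₀) h
    · rw [h0 j hj, Finset.sum_eq_zero]
      intro i _
      exact if_neg fun h => hj ⟨i, h⟩
  rw [← key, Fintype.linearCombination_apply]
  exact Submodule.sum_mem _ fun i _ => Submodule.smul_mem _ _ (snf.bN i).2

/-- The core statement for a finite free `ℤ`-module. -/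
theorem stmt4_core {F : Type} [AddCommGroup F] [Module ℤ F] [Module.Finite ℤ F]
    [Module.Free ℤ F] (M' : Submodule ℤ F) (p : ℕ) (hp : p.Prime) (x : F)
    (hx : ∀ c : ℤ, ¬ (p : ℤ) ∣ c → c • x ∉ M') :
    ∃ ψ : F →ₗ[ℤ] ℤ, ∃ n : ℕ, ∀ m ∈ M', ¬ ((p : ℤ) ^ n ∣ ψ x - ψ m) := by
  classical
  obtain ⟨n, snf⟩ := M'.smithNormalForm (Module.Free.chooseBasis ℤ F)
  by_cases H : (∃ j, j ∉ Set.range snf.f ∧ snf.bM.repr x j ≠ 0) ∨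
      (∃ i, ∃ v : ℕ, ((p : ℤ) ^ v ∣ snf.a i) ∧ ¬ ((p : ℤ) ^ v ∣ snf.bM.repr x (snf.f i)))
  · rcases H with ⟨j, hj, hxj⟩ | ⟨i, v, hva, hvx⟩
    · refine ⟨snf.bM.coord j, (snf.bM.repr x j).natAbs, fun m hm hdvd => ?_⟩
      have hm0 : snf.bM.repr m j = 0 := snf.repr_eq_zero_of_notMem_range ⟨m, hm⟩ hj
      simp only [Module.Basis.coord_apply, hm0, sub_zero] at hdvd
      have h1 : p ^ (snf.bM.repr x j).natAbs ∣ (snf.bM.repr x j).natAbs := by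
        have h := Int.natAbs_dvd_natAbs.mpr hdvd
        rwa [Int.natAbs_pow, Int.natAbs_natCast] at h
      have h2 := Nat.le_of_dvd (Int.natAbs_pos.mpr hxj) h1
      have h3 : (snf.bM.repr x j).natAbs < 2 ^ (snf.bM.repr x j).natAbs := Nat.lt_two_pow_self
      have h4 : (2 : ℕ) ^ (snf.bM.repr x j).natAbs ≤ p ^ (snf.bM.repr x j).natAbs :=
        Nat.pow_le_pow_left hp.two_le _
      omega
    · refine ⟨snf.bM.coord (snf.f i), v, fun m hm hdvd => ?_⟩
      simp only [Module.Basis.coord_apply] at hdvd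
      have hm0 : (p : ℤ) ^ v ∣ snf.bM.repr m (snf.f i) := by
        have h := snf.repr_apply_embedding_eq_repr_smul (m := ⟨m, hm⟩) (i := i)
        rw [show ((⟨m, hm⟩ : M') : F) = m from rfl] at h
        rw [h, LinearEquiv.map_smul, Finsupp.smul_apply, smul_eq_mul]
        exact hva.mul_right _
      exact hvx (by simpa using dvd_add hdvd hm0)
  · push_neg at H
    obtain ⟨h1, h2⟩ := H
    have hzero : ∀ i, snf.a i = 0 → snf.bM.repr x (snf.f i) = 0 := by
      intro i hai
      by_contra hne
      have hv := h2 i ((snf.bM.repr x (snf.f i)).natAbs) (by rw [hai]; exact dvd_zero _)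
      have h1' : p ^ (snf.bM.repr x (snf.f i)).natAbs ∣ (snf.bM.repr x (snf.f i)).natAbs := by
        have h := Int.natAbs_dvd_natAbs.mpr hv
        rwa [Int.natAbs_pow, Int.natAbs_natCast] at h
      have h2' := Nat.le_of_dvd (Int.natAbs_pos.mpr hne) h1'
      have h3 : (snf.bM.repr x (snf.f i)).natAbs < 2 ^ (snf.bM.repr x (snf.f i)).natAbs :=
        Nat.lt_two_pow_self
      have h4 : (2 : ℕ) ^ (snf.bM.repr x (snf.f i)).natAbs ≤
          p ^ (snf.bM.repr x (snf.f i)).natAbs := Nat.pow_le_pow_left hp.two_le _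
      omega
    set w : Fin n → ℕ := fun i => if snf.a i = 0 then 1 else
      (snf.a i).natAbs / p ^ ((snf.a i).natAbs.factorization p) with hw
    set c : ℤ := ∏ i : Fin n, (w i : ℤ) with hc
    have hpc : ¬ (p : ℤ) ∣ c := by
      rw [hc]
      intro hdvd
      have hpZ : Prime (p : ℤ) := Nat.prime_iff_prime_int.mp hp
      obtain ⟨i, -, hi⟩ := (hpZ.dvd_finset_prod_iff _).mp hdvd
      rw [Int.natCast_dvd_natCast] at hi
      by_cases hai : snf.a i = 0
      · simp only [hw, if_pos hai] at hi
        have := Nat.le_of_dvd one_pos hi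
        have := hp.two_le
        omega
      · simp only [hw, if_neg hai] at hi
        exact Nat.not_dvd_ordCompl hp (Int.natAbs_ne_zero.mpr hai) hi
    refine absurd (stmt4_mem_of_repr snf (c • x) ?_ ?_) (hx c hpc)
    · intro j hj
      rw [map_zsmul, Finsupp.smul_apply, h1 j hj, smul_zero]
    · intro i
      rw [map_zsmul, Finsupp.smul_apply, smul_eq_mul]
      by_cases hai : snf.a i = 0
      · rw [hzero i hai, mul_zero]
        exact dvd_zero _
      · set v := (snf.a i).natAbs.factorization p with hv
        have hsplit : (snf.a i).natAbs = p ^ v * w i := by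
          rw [hw]; simp only [if_neg hai]
          exact (Nat.ordProj_mul_ordCompl_eq_self (snf.a i).natAbs p).symm
        have hpv : (p : ℤ) ^ v ∣ snf.bM.repr x (snf.f i) := by
          apply h2
          rw [← Int.dvd_natAbs]
          exact_mod_cast Nat.ordProj_dvd (snf.a i).natAbs p
        have hwc : ((w i : ℤ)) ∣ c := Finset.dvd_prod_of_mem _ (Finset.mem_univ i)
        have hkey : ((snf.a i).natAbs : ℤ) ∣ c * snf.bM.repr x (snf.f i) := by
          rw [hsplit]
          push_cast
          rw [mul_comm c]
          exact mul_dvd_mul hpv hwc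
        exact Int.natAbs_dvd.mp hkey


/-- Let `N` be a finitely generated abelian group, `M` a subgroup
containing the torsion subgroup, and `p` a prime.  If `x ∈ N` does not lie in the image
of `M ⊗ ℤ_(p)` in `N ⊗ ℤ_(p)` (since `N_tors ⊆ M`, this means: `c • x ∉ M` for every
integer `c` prime to `p`), then there is a homomorphism `ψ₀ : N → ℤ` such that
`ψ₀ x ∉ ψ₀(M) + pⁿℤ` for all sufficiently large `n`. -/
theorem stmt4
    (N : Type) [AddCommGroup N] [AddGroup.FG N]
    (M : AddSubgroup N)
    (htors : ∀ y : N, (∃ k : ℤ, k ≠ 0 ∧ k • y = 0) → y ∈ M)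
    (p : ℕ) (hp : p.Prime) (x : N)
    (hx : ∀ c : ℤ, ¬ (p : ℤ) ∣ c → c • x ∉ M) :
    ∃ ψ₀ : N →+ ℤ, ∃ n₀ : ℕ, ∀ n ≥ n₀,
      ∀ m ∈ M, ¬ ((p : ℤ) ^ n ∣ ψ₀ x - ψ₀ m) := by
  classical
  have hfin : Module.Finite ℤ N := Module.Finite.iff_addGroup_fg.mpr ‹_›
  set T := Submodule.torsion ℤ N with hT
  set π : N →ₗ[ℤ] N ⧸ T := T.mkQ with hπ
  set M' : Submodule ℤ (N ⧸ T) := (AddSubgroup.toIntSubmodule M).map π with hM'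
  have hx' : ∀ c : ℤ, ¬ (p : ℤ) ∣ c → c • (π x) ∉ M' := by
    intro c hc hmem
    rw [← map_zsmul π c x] at hmem
    obtain ⟨y, hyM, hye⟩ := Submodule.mem_map.mp hmem
    have hker : c • x - y ∈ T := by
      rw [← Submodule.ker_mkQ T, LinearMap.mem_ker, map_sub, hye, sub_self]
    obtain ⟨a, ha⟩ := (Submodule.mem_torsion_iff _).mp hker
    have haz : (a : ℤ) ≠ 0 := nonZeroDivisors.coe_ne_zero a
    have hmem2 : c • x - y ∈ M := htors _ ⟨a, haz, ha⟩
    have : c • x ∈ M := by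
      have := M.add_mem hmem2 hyM
      simpa using this
    exact hx c hc this
  obtain ⟨ψ, n, hn⟩ := stmt4_core M' p hp (π x) hx'
  refine ⟨(ψ ∘ₗ π).toAddMonoidHom, n, fun n' hn' m hm hdvd => ?_⟩
  have hd : (p : ℤ) ^ n ∣ ψ (π x) - ψ (π m) :=
    dvd_trans (pow_dvd_pow _ hn') hdvd
  exact hn (π m) ⟨m, hm, rfl⟩ hd
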